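/- Consider the quadratic minimax problem min over x ∈ ℝ^{n_x} max over y ∈ ℝ^{n_y} of f(x,y) = ½ zᵀGz + cᵀz subject to Dz + h = 0, where z = (x,y), G = [[G₁₁, G₁₂],[G₁₂ᵀ, G₂₂]] is invertible with G₁₁ symmetric, G₂₂ symmetric negative definite, D = [A B] with A ∈ ℝ^{q×n_x}, B ∈ ℝ^{q×n_y} of full row rank, and assume Γ := G₁₁ − [G₁₂ Aᵀ]·[[G₂₂, Bᵀ],[B, 0]]⁻¹·[G₁₂ᵀ; A] is positive definite (the block matrix [[G₂₂, Bᵀ],[B, 0]] being invertible) and DG⁻¹Dᵀ is invertible. Set N = Dᵀ, H = G⁻¹ − G⁻¹N(NᵀG⁻¹N)⁻¹NᵀG⁻¹, and g(z) = Gz + c. If ẑ satisfies Dẑ + h = 0, then the point z̄ = ẑ − H g(ẑ), written z̄ = (x̄, ȳ), satisfies: (a) Dz̄ + h = 0; (b) f(x̄, y) ≤ f(x̄, ȳ) for every y ∈ ℝ^{n_y} with Ax̄ + By + h = 0; (c) f(x̄, ȳ) ≤ sup{ f(x, y) : y ∈ ℝ^{n_y}, Ax + By + h = 0 } for every x ∈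 ℝ^{n_x}; i.e., z̄ is a minimax point of the equality-constrained problem. -/

import Mathlib

open Matrix

lemma dp_symm {m n : ℕ} (M : Matrix (Fin m) (Fin n) ℝ) (a : Fin m → ℝ) (b : Fin n → ℝ) :
    a ⬝ᵥ M *ᵥ b = b ⬝ᵥ Mᵀ *ᵥ a := by
  rw [Matrix.dotProduct_mulVec, Matrix.mulVec_transpose, dotProduct_comm]


lemma aux_concave_max {nx ny q : ℕ}
    (G12 : Matrix (Fin nx) (Fin ny) ℝ) (G22 : Matrix (Fin ny) (Fin ny) ℝ)
    (hG22 : G22.IsSymm) (hG22nd : (-G22).PosDef)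
    (B : Matrix (Fin q) (Fin ny) ℝ) (cy : Fin ny → ℝ)
    (x : Fin nx → ℝ) (y0 y : Fin ny → ℝ) (lam : Fin q → ℝ)
    (hstat : G12ᵀ *ᵥ x + G22 *ᵥ y0 + cy + Bᵀ *ᵥ lam = 0)
    (hfeas : B *ᵥ y = B *ᵥ y0) :
    x ⬝ᵥ G12 *ᵥ y + (1/2)*(y ⬝ᵥ G22 *ᵥ y) + cy ⬝ᵥ y ≤
    x ⬝ᵥ G12 *ᵥ y0 + (1/2)*(y0 ⬝ᵥ G22 *ᵥ y0) + cy ⬝ᵥ y0 := by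
  set d := y - y0 with hd
  have hy : y = y0 + d := by simp [hd]
  have hBd : B *ᵥ d = 0 := by rw [hd, Matrix.mulVec_sub, hfeas, sub_self]
  have h1 : 0 ≤ d ⬝ᵥ (-G22) *ᵥ d := by
    simpa using hG22nd.posSemidef.dotProduct_mulVec_nonneg d
  have h1' : d ⬝ᵥ G22 *ᵥ d ≤ 0 := by
    rw [Matrix.neg_mulVec, dotProduct_neg] at h1; linarith
  have hs : d ⬝ᵥ (G12ᵀ *ᵥ x) + d ⬝ᵥ (G22 *ᵥ y0) + d ⬝ᵥ cy + d ⬝ᵥ (Bᵀ *ᵥ lam) = 0 := by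
    have := congrArg (fun v => d ⬝ᵥ v) hstat
    simpa [dotProduct_add] using this
  have hdB : d ⬝ᵥ (Bᵀ *ᵥ lam) = 0 := by
    rw [dp_symm, Matrix.transpose_transpose, hBd]; simp
  have e1 : x ⬝ᵥ G12 *ᵥ d = d ⬝ᵥ (G12ᵀ *ᵥ x) := dp_symm G12 x d
  have e2 : y0 ⬝ᵥ G22 *ᵥ d = d ⬝ᵥ (G22 *ᵥ y0) := by
    rw [dp_symm G22 y0 d, hG22.eq]
  rw [hy]
  simp only [Matrix.mulVec_add, dotProduct_add, add_dotProduct]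
  nlinarith [hs, hdB, e1, e2, h1', dotProduct_comm cy d]

/-- Lemma: for the equality-constrained quadratic minimax problem, starting from any
feasible point `ẑ`, the point `z̄ = ẑ − H g(ẑ)` is a minimax point. -/
theorem stmt_2 {nx ny q : ℕ}
    (G11 : Matrix (Fin nx) (Fin nx) ℝ) (G12 : Matrix (Fin nx) (Fin ny) ℝ)
    (G22 : Matrix (Fin ny) (Fin ny) ℝ)
    (hG11 : G11.IsSymm) (hG22 : G22.IsSymm) (hG22nd : (-G22).PosDef)
    (A : Matrix (Fin q) (Fin nx) ℝ) (B : Matrix (Fin q) (Fin ny) ℝ)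
    (hB : LinearIndependent ℝ (fun i : Fin q => B i))
    (cx : Fin nx → ℝ) (cy : Fin ny → ℝ) (h : Fin q → ℝ)
    -- assembled data
    (G : Matrix (Fin nx ⊕ Fin ny) (Fin nx ⊕ Fin ny) ℝ)
    (hG : G = Matrix.fromBlocks G11 G12 G12ᵀ G22)
    (hGinv : IsUnit G.det)
    (c : Fin nx ⊕ Fin ny → ℝ) (hc : c = Sum.elim cx cy)
    (D : Matrix (Fin q) (Fin nx ⊕ Fin ny) ℝ) (hD : D = Matrix.fromCols A B)
    (hDGD : IsUnit (D * G⁻¹ * Dᵀ).det)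
    -- the KKT block matrix and the Schur-type matrix Γ
    (Kb : Matrix (Fin ny ⊕ Fin q) (Fin ny ⊕ Fin q) ℝ)
    (hKb : Kb = Matrix.fromBlocks G22 Bᵀ B 0)
    (hKbInv : IsUnit Kb.det)
    (Γ : Matrix (Fin nx) (Fin nx) ℝ)
    (hΓ : Γ = G11 - Matrix.fromCols G12 Aᵀ * Kb⁻¹ * Matrix.fromRows G12ᵀ A)
    (hΓpd : Γ.PosDef)
    -- the objective
    (f : (Fin nx → ℝ) → (Fin ny → ℝ) → ℝ)
    (hf : ∀ x y, f x y = (1 / 2) * (Sum.elim x y ⬝ᵥ G *ᵥ Sum.elim x y) + c ⬝ᵥ Sum.elim x y)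
    -- N, H, g
    (N : Matrix (Fin nx ⊕ Fin ny) (Fin q) ℝ) (hN : N = Dᵀ)
    (H : Matrix (Fin nx ⊕ Fin ny) (Fin nx ⊕ Fin ny) ℝ)
    (hH : H = G⁻¹ - G⁻¹ * N * (Nᵀ * G⁻¹ * N)⁻¹ * Nᵀ * G⁻¹)
    (g : (Fin nx ⊕ Fin ny → ℝ) → Fin nx ⊕ Fin ny → ℝ)
    (hg : ∀ z, g z = G *ᵥ z + c)
    -- the feasible starting point and the candidate minimax point
    (zhat : Fin nx ⊕ Fin ny → ℝ) (hzhat : D *ᵥ zhat + h = 0)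
    (zbar : Fin nx ⊕ Fin ny → ℝ) (hzbar : zbar = zhat - H *ᵥ g zhat)
    (xbar : Fin nx → ℝ) (hxbar : xbar = fun i => zbar (Sum.inl i))
    (ybar : Fin ny → ℝ) (hybar : ybar = fun j => zbar (Sum.inr j)) :
    D *ᵥ zbar + h = 0 ∧
    (∀ y : Fin ny → ℝ, A *ᵥ xbar + B *ᵥ y + h = 0 → f xbar y ≤ f xbar ybar) ∧
    (∀ x : Fin nx → ℝ,
      f xbar ybar ≤ sSup {v : ℝ | ∃ y : Fin ny → ℝ, A *ᵥ x + B *ᵥ y + h = 0 ∧ v = f x y}) := by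
  have hGmul : G * G⁻¹ = 1 := Matrix.mul_nonsing_inv G hGinv
  have hGmul' : G⁻¹ * G = 1 := Matrix.nonsing_inv_mul G hGinv
  have hNt : Nᵀ = D := by rw [hN, Matrix.transpose_transpose]
  have hKeq : Nᵀ * G⁻¹ * N = D * G⁻¹ * Dᵀ := by rw [hNt, hN]
  -- part (a)
  have hDH : D * H = 0 := by
    have key : D * G⁻¹ * Dᵀ * (D * G⁻¹ * Dᵀ)⁻¹ * (D * G⁻¹) = D * G⁻¹ := by
      rw [Matrix.mul_nonsing_inv _ hDGD, Matrix.one_mul]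
    rw [hH, hKeq, hNt, hN, Matrix.mul_sub]
    simp only [← Matrix.mul_assoc] at key ⊢
    rw [key, sub_self]
  have hz1 : D *ᵥ zbar = D *ᵥ zhat := by
    rw [hzbar, Matrix.mulVec_sub, Matrix.mulVec_mulVec, hDH, Matrix.zero_mulVec, sub_zero]
  have part1 : D *ᵥ zbar + h = 0 := by rw [hz1]; exact hzhat
  -- the multiplier μ
  set μ := (D * G⁻¹ * Dᵀ)⁻¹ *ᵥ (D *ᵥ (G⁻¹ *ᵥ g zhat)) with hμ
  have hGH : G * H = 1 - Dᵀ * ((D * G⁻¹ * Dᵀ)⁻¹ * (D * G⁻¹)) := by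
    rw [hH, hKeq, hNt, hN, Matrix.mul_sub, hGmul]
    congr 1
    calc G * (G⁻¹ * Dᵀ * (D * G⁻¹ * Dᵀ)⁻¹ * D * G⁻¹)
        = (G * G⁻¹) * (Dᵀ * ((D * G⁻¹ * Dᵀ)⁻¹ * (D * G⁻¹))) := by
          simp only [Matrix.mul_assoc]
      _ = Dᵀ * ((D * G⁻¹ * Dᵀ)⁻¹ * (D * G⁻¹)) := by rw [hGmul, Matrix.one_mul]
  have hgzbar : g zbar = Dᵀ *ᵥ μ := by
    have e : g zbar = g zhat - (G * H) *ᵥ g zhat := by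
      rw [hg, hzbar, Matrix.mulVec_sub, Matrix.mulVec_mulVec, hg zhat]
      abel
    rw [e, hGH, Matrix.sub_mulVec, Matrix.one_mulVec, hμ]
    simp only [← Matrix.mulVec_mulVec, Matrix.mul_assoc]
    abel
  -- components
  have hzbars : zbar = Sum.elim xbar ybar := by
    funext i; cases i <;> simp [hxbar, hybar]
  have hgcomp : g zbar =
      Sum.elim (G11 *ᵥ xbar + G12 *ᵥ ybar + cx) (G12ᵀ *ᵥ xbar + G22 *ᵥ ybar + cy) := by
    rw [hg, hzbars, hG, hc, Matrix.fromBlocks_mulVec]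
    funext i; cases i <;> simp [Sum.elim_comp_inl, Sum.elim_comp_inr] <;> ring
  have hDt : Dᵀ *ᵥ μ = Sum.elim (Aᵀ *ᵥ μ) (Bᵀ *ᵥ μ) := by
    rw [hD, Matrix.transpose_fromCols, Matrix.fromRows_mulVec]
  have hsx : G11 *ᵥ xbar + G12 *ᵥ ybar + cx = Aᵀ *ᵥ μ := by
    have e := hgzbar; rw [hgcomp, hDt] at e
    exact funext fun i => congrFun e (Sum.inl i)
  have hsy : G12ᵀ *ᵥ xbar + G22 *ᵥ ybar + cy = Bᵀ *ᵥ μ := by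
    have e := hgzbar; rw [hgcomp, hDt] at e
    exact funext fun i => congrFun e (Sum.inr i)
  have hfeasbar : A *ᵥ xbar + B *ᵥ ybar + h = 0 := by
    have e : D *ᵥ zbar = A *ᵥ xbar + B *ᵥ ybar := by
      rw [hzbars, hD, Matrix.fromCols_mulVec_sumElim]
    rw [← e]; exact part1
  have hfx : ∀ x y, f x y = (1/2)*(x ⬝ᵥ G11 *ᵥ x) + x ⬝ᵥ G12 *ᵥ y
      + (1/2)*(y ⬝ᵥ G22 *ᵥ y) + cx ⬝ᵥ x + cy ⬝ᵥ y := by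
    intro x y
    rw [hf, hG, hc, Matrix.fromBlocks_mulVec, Sum.elim_comp_inl, Sum.elim_comp_inr,
      sumElim_dotProduct_sumElim, sumElim_dotProduct_sumElim,
      dotProduct_add, dotProduct_add, dp_symm G12ᵀ y x,
      Matrix.transpose_transpose]
    ring
  -- part (b) and minimax
  have part2 : ∀ y : Fin ny → ℝ, A *ᵥ xbar + B *ᵥ y + h = 0 → f xbar y ≤ f xbar ybar := by
    intro y hy
    have hstat : G12ᵀ *ᵥ xbar + G22 *ᵥ ybar + cy + Bᵀ *ᵥ (-μ) = 0 := by
      rw [Matrix.mulVec_neg]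
      linear_combination hsy
    have hfe : B *ᵥ y = B *ᵥ ybar := by linear_combination hy - hfeasbar
    have := aux_concave_max G12 G22 hG22 hG22nd B cy xbar ybar y (-μ) hstat hfe
    rw [hfx, hfx]
    linarith
  refine ⟨part1, part2, ?_⟩
  intro x
  -- solve the KKT system at x
  set rhs : Fin ny ⊕ Fin q → ℝ := Sum.elim (-(G12ᵀ *ᵥ x + cy)) (-(A *ᵥ x + h)) with hrhs
  set p := Kb⁻¹ *ᵥ rhs with hp
  set yx : Fin ny → ℝ := p ∘ Sum.inl with hyx
  set lamx : Fin q → ℝ := p ∘ Sum.inr with hlamx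
  have hpe : p = Sum.elim yx lamx := funext fun i => by cases i <;> rfl
  have hKbp : Kb *ᵥ p = rhs := by
    rw [hp, Matrix.mulVec_mulVec, Matrix.mul_nonsing_inv _ hKbInv, Matrix.one_mulVec]
  have hKbp2 : Kb *ᵥ p = Sum.elim (G22 *ᵥ yx + Bᵀ *ᵥ lamx) (B *ᵥ yx) := by
    rw [hpe, hKb, Matrix.fromBlocks_mulVec, Sum.elim_comp_inl, Sum.elim_comp_inr,
      Matrix.zero_mulVec, add_zero]
  have e := hKbp2.symm.trans hKbp
  have hstatx : G22 *ᵥ yx + Bᵀ *ᵥ lamx = -(G12ᵀ *ᵥ x + cy) :=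
    funext fun i => congrFun e (Sum.inl i)
  have hfeasx : B *ᵥ yx = -(A *ᵥ x + h) :=
    funext fun i => congrFun e (Sum.inr i)
  have hfeasx' : A *ᵥ x + B *ᵥ yx + h = 0 := by rw [hfeasx]; abel
  have hstatx' : G12ᵀ *ᵥ x + G22 *ᵥ yx + cy + Bᵀ *ᵥ lamx = 0 := by
    linear_combination hstatx
  -- yx maximizes f x over the feasible set
  have hmax : ∀ y : Fin ny → ℝ, A *ᵥ x + B *ᵥ y + h = 0 → f x y ≤ f x yx := by
    intro y hy
    have hfe : B *ᵥ y = B *ᵥ yx := by linear_combination hy - hfeasx'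
    have := aux_concave_max G12 G22 hG22 hG22nd B cy x yx y lamx hstatx' hfe
    rw [hfx, hfx]
    linarith
  set S : Set ℝ := {v : ℝ | ∃ y : Fin ny → ℝ, A *ᵥ x + B *ᵥ y + h = 0 ∧ v = f x y} with hS
  have hmem : f x yx ∈ S := ⟨yx, hfeasx', rfl⟩
  have hbdd : BddAbove S := by
    refine ⟨f x yx, ?_⟩
    rintro v ⟨y, hyf, rfl⟩
    exact hmax y hyf
  -- the Γ computation
  set u := x - xbar with hu
  set w := yx - ybar with hw
  set ν := lamx + μ with hν
  have r1 : G22 *ᵥ w + Bᵀ *ᵥ ν = -(G12ᵀ *ᵥ u) := by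
    rw [hw, hν, hu, Matrix.mulVec_sub, Matrix.mulVec_add, Matrix.mulVec_sub]
    linear_combination hstatx - hsy
  have r2 : B *ᵥ w = -(A *ᵥ u) := by
    rw [hw, hu, Matrix.mulVec_sub, Matrix.mulVec_sub]
    linear_combination hfeasx' - hfeasbar
  have hKbwv : Kb *ᵥ Sum.elim w ν = Sum.elim (-(G12ᵀ *ᵥ u)) (-(A *ᵥ u)) := by
    rw [hKb, Matrix.fromBlocks_mulVec, Sum.elim_comp_inl, Sum.elim_comp_inr,
      Matrix.zero_mulVec, add_zero, r1, r2]
  have hKinvrel : Kb⁻¹ *ᵥ (Matrix.fromRows G12ᵀ A *ᵥ u) = -(Sum.elim w ν) := by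
    have e2 : Matrix.fromRows G12ᵀ A *ᵥ u = Kb *ᵥ (-(Sum.elim w ν)) := by
      rw [Matrix.mulVec_neg, hKbwv, Matrix.fromRows_mulVec]
      funext i; cases i <;> simp
    rw [e2, Matrix.mulVec_mulVec, Matrix.nonsing_inv_mul _ hKbInv, Matrix.one_mulVec]
  have hΓu : Γ *ᵥ u = G11 *ᵥ u + (G12 *ᵥ w + Aᵀ *ᵥ ν) := by
    rw [hΓ, Matrix.sub_mulVec]
    have e3 : (Matrix.fromCols G12 Aᵀ * Kb⁻¹ * Matrix.fromRows G12ᵀ A) *ᵥ u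
        = -(G12 *ᵥ w + Aᵀ *ᵥ ν) := by
      rw [← Matrix.mulVec_mulVec, ← Matrix.mulVec_mulVec, hKinvrel, Matrix.mulVec_neg,
        Matrix.fromCols_mulVec_sumElim]
    rw [e3, sub_neg_eq_add]
  have hpos : 0 ≤ u ⬝ᵥ Γ *ᵥ u := by
    rcases eq_or_ne u 0 with h0 | h0
    · simp [h0]
    · simpa using (hΓpd.dotProduct_mulVec_pos h0).le
  -- scalar bookkeeping
  have s1 : u ⬝ᵥ (G11 *ᵥ xbar) + u ⬝ᵥ (G12 *ᵥ ybar) + u ⬝ᵥ cx = u ⬝ᵥ (Aᵀ *ᵥ μ) := by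
    have := congrArg (fun v => u ⬝ᵥ v) hsx
    simpa [dotProduct_add] using this
  have s2 : w ⬝ᵥ (G12ᵀ *ᵥ xbar) + w ⬝ᵥ (G22 *ᵥ ybar) + w ⬝ᵥ cy = w ⬝ᵥ (Bᵀ *ᵥ μ) := by
    have := congrArg (fun v => w ⬝ᵥ v) hsy
    simpa [dotProduct_add] using this
  have s3 : w ⬝ᵥ (G22 *ᵥ w) + w ⬝ᵥ (Bᵀ *ᵥ ν) = -(w ⬝ᵥ (G12ᵀ *ᵥ u)) := by
    have := congrArg (fun v => w ⬝ᵥ v) r1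
    simpa [dotProduct_add, dotProduct_neg] using this
  have s4 : μ ⬝ᵥ (B *ᵥ w) = -(μ ⬝ᵥ (A *ᵥ u)) := by
    have := congrArg (fun v => μ ⬝ᵥ v) r2
    simpa [dotProduct_neg] using this
  have s5 : ν ⬝ᵥ (B *ᵥ w) = -(ν ⬝ᵥ (A *ᵥ u)) := by
    have := congrArg (fun v => ν ⬝ᵥ v) r2
    simpa [dotProduct_neg] using this
  have s6 : u ⬝ᵥ (Γ *ᵥ u) = u ⬝ᵥ (G11 *ᵥ u) + (u ⬝ᵥ (G12 *ᵥ w) + u ⬝ᵥ (Aᵀ *ᵥ ν)) := by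
    have := congrArg (fun v => u ⬝ᵥ v) hΓu
    simpa [dotProduct_add] using this
  have t1 : xbar ⬝ᵥ G11 *ᵥ u = u ⬝ᵥ G11 *ᵥ xbar := by rw [dp_symm G11 xbar u, hG11.eq]
  have t2 : xbar ⬝ᵥ G12 *ᵥ w = w ⬝ᵥ G12ᵀ *ᵥ xbar := dp_symm G12 xbar w
  have t3 : ybar ⬝ᵥ G22 *ᵥ w = w ⬝ᵥ G22 *ᵥ ybar := by rw [dp_symm G22 ybar w, hG22.eq]
  have t4 : cx ⬝ᵥ u = u ⬝ᵥ cx := dotProduct_comm cx u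
  have t5 : cy ⬝ᵥ w = w ⬝ᵥ cy := dotProduct_comm cy w
  have t6 : u ⬝ᵥ (Aᵀ *ᵥ μ) = μ ⬝ᵥ (A *ᵥ u) := by
    rw [dp_symm Aᵀ u μ, Matrix.transpose_transpose]
  have t7 : w ⬝ᵥ (Bᵀ *ᵥ μ) = μ ⬝ᵥ (B *ᵥ w) := by
    rw [dp_symm Bᵀ w μ, Matrix.transpose_transpose]
  have t8 : w ⬝ᵥ (Bᵀ *ᵥ ν) = ν ⬝ᵥ (B *ᵥ w) := by
    rw [dp_symm Bᵀ w ν, Matrix.transpose_transpose]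
  have t9 : u ⬝ᵥ (Aᵀ *ᵥ ν) = ν ⬝ᵥ (A *ᵥ u) := by
    rw [dp_symm Aᵀ u ν, Matrix.transpose_transpose]
  have t10 : w ⬝ᵥ (G12ᵀ *ᵥ u) = u ⬝ᵥ (G12 *ᵥ w) := by
    rw [dp_symm G12ᵀ w u, Matrix.transpose_transpose]
  have key : f xbar ybar ≤ f x yx := by
    have hx' : x = xbar + u := by rw [hu]; ring
    have hy' : yx = ybar + w := by rw [hw]; ring
    rw [hfx, hfx, hx', hy']
    simp only [Matrix.mulVec_add, dotProduct_add, add_dotProduct]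
    linarith [s1, s2, s3, s4, s5, s6, t1, t2, t3, t4, t5, t6, t7, t8, t9, t10, hpos]
  exact key.trans (le_csSup hbdd hmem)
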